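/- Let p ≥ 2 be an integer and let A be an n×n matrix whose entries are convergent power series (elements of ℂ{z}, i.e. power series with positive radius of convergence) such that A(0) is invertible. Then the unique matrix F with entries in ℂ[[z]], F(0) = Iₙ and A(z)·F(z) = F(z^p)·A(0) has all its entries of positive radius of convergence, i.e. F has entries in ℂ{z}. -/

import Mathlib

/-- The Mahler substitution `f(z) ↦ f(z^p)` on formal power series. -/
noncomputable def mahlerSubst (p : ℕ) (f : PowerSeries ℂ) : PowerSeries ℂ :=
  PowerSeries.mk fun k => if p ∣ k then PowerSeries.coeff (R := ℂ) (k / p) f else 0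

/-- A formal power series over `ℂ` has positive radius of convergence, i.e. it is an
element of `ℂ{z}`. -/
def HasPosRadius (f : PowerSeries ℂ) : Prop :=
  ∃ r : ℝ, 0 < r ∧ Summable fun k : ℕ => ‖PowerSeries.coeff (R := ℂ) k f‖ * r ^ k

section Aux

attribute [local instance] Matrix.linftyOpNormedRing

open Finset PowerSeries

lemma matrix_entry_norm_le {n : ℕ} (M : Matrix (Fin n) (Fin n) ℂ) (i j : Fin n) :
    ‖M i j‖ ≤ ‖M‖ := by
  have h : ‖M i j‖₊ ≤ ‖M‖₊ := by
    rw [Matrix.linfty_opNNNorm_def]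
    exact le_trans
      (Finset.single_le_sum (f := fun j => ‖M i j‖₊) (fun _ _ => by positivity) (mem_univ j))
      (Finset.le_sup (f := fun i => ∑ j, ‖M i j‖₊) (mem_univ i))
  exact_mod_cast h

lemma matrix_norm_le_sum {n : ℕ} (M : Matrix (Fin n) (Fin n) ℂ) :
    ‖M‖ ≤ ∑ i, ∑ j, ‖M i j‖ := by
  have h : ‖M‖₊ ≤ ∑ i, ∑ j, ‖M i j‖₊ := by
    rw [Matrix.linfty_opNNNorm_def]
    exact Finset.sup_le fun i _ =>
      Finset.single_le_sum (f := fun i => ∑ j, ‖M i j‖₊) (fun _ _ => by positivity) (mem_univ i)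
  calc ‖M‖ = ((‖M‖₊ : ℝ)) := rfl
    _ ≤ ((∑ i, ∑ j, ‖M i j‖₊ : NNReal) : ℝ) := by exact_mod_cast h
    _ = ∑ i, ∑ j, ‖M i j‖ := by push_cast; rfl

lemma coeff_matrix_mul {n : ℕ} (M N : Matrix (Fin n) (Fin n) (PowerSeries ℂ)) (k : ℕ) :
    (M * N).map (PowerSeries.coeff (R := ℂ) k) =
      ∑ x ∈ Finset.HasAntidiagonal.antidiagonal k, (M.map (coeff (R := ℂ) x.1)) * (N.map (coeff (R := ℂ) x.2)) := by
  ext i j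
  simp only [Matrix.map_apply, Matrix.mul_apply, Matrix.sum_apply, map_sum,
    PowerSeries.coeff_mul]
  rw [Finset.sum_comm]

lemma coeff_mahlerSubst (p k : ℕ) (f : PowerSeries ℂ) :
    PowerSeries.coeff (R := ℂ) k (mahlerSubst p f) =
      if p ∣ k then PowerSeries.coeff (R := ℂ) (k / p) f else 0 := by
  simp [mahlerSubst]

/-- Let `p ≥ 2` and let `A` be an `n×n` matrix of convergent power
series with `A(0)` invertible. Then the unique matrix `F` over `ℂ[[z]]` with
`F(0) = 1` and `A(z)·F(z) = F(z^p)·A(0)` has all its entries convergent. -/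
theorem mahler_formal_solution_is_convergent
    (p n : ℕ) (hp : 2 ≤ p)
    (A : Matrix (Fin n) (Fin n) (PowerSeries ℂ))
    (hAconv : ∀ i j, HasPosRadius (A i j))
    (hA0 : IsUnit ((A.map (PowerSeries.constantCoeff (R := ℂ))).det)) :
    ∀ F : Matrix (Fin n) (Fin n) (PowerSeries ℂ),
      F.map (PowerSeries.constantCoeff (R := ℂ)) = 1 →
      A * F = (F.map (mahlerSubst p)) *
        ((A.map (PowerSeries.constantCoeff (R := ℂ))).map (PowerSeries.C (R := ℂ))) →
      ∀ i j, HasPosRadius (F i j) := by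
  intro F hF0 heq i j
  classical
  set A0 : Matrix (Fin n) (Fin n) ℂ := A.map (PowerSeries.constantCoeff (R := ℂ)) with hA0def
  set Ak : ℕ → Matrix (Fin n) (Fin n) ℂ := fun k => A.map (coeff (R := ℂ) k) with hAk
  set Fk : ℕ → Matrix (Fin n) (Fin n) ℂ := fun k => F.map (coeff (R := ℂ) k) with hFkdef
  -- entrywise geometric bounds for A
  choose r hrpos hrsum using hAconv
  set Bf : Fin n → Fin n → ℝ := fun i j => (∑' k, ‖coeff (R := ℂ) k (A i j)‖ * r i j ^ k) ⊔ 0 with hBf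
  set Cf : Fin n → Fin n → ℝ := fun i j => (r i j)⁻¹ ⊔ 1 with hCf
  set B : ℝ := ∑ i, ∑ j, Bf i j with hB
  set C : ℝ := 1 + ∑ i, ∑ j, Cf i j with hC
  have hBfnn : ∀ i j, 0 ≤ Bf i j := fun i j => le_sup_right
  have hCf1 : ∀ i j, (1:ℝ) ≤ Cf i j := fun i j => le_sup_right
  have hBnn : 0 ≤ B := Finset.sum_nonneg fun i _ => Finset.sum_nonneg fun j _ => hBfnn i j
  have hC1 : 1 ≤ C := by
    have h0 : (0:ℝ) ≤ ∑ i, ∑ j, Cf i j := Finset.sum_nonneg fun i _ =>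
      Finset.sum_nonneg fun j _ => le_trans zero_le_one (hCf1 i j)
    rw [hC]; linarith
  have hCnn : (0:ℝ) ≤ C := le_trans zero_le_one hC1
  have hentry : ∀ k (i j : Fin n), ‖coeff (R := ℂ) k (A i j)‖ ≤ B * C ^ k := by
    intro k i' j'
    have hrk : (0:ℝ) < r i' j' ^ k := pow_pos (hrpos i' j') k
    have h1 : ‖coeff (R := ℂ) k (A i' j')‖ * r i' j' ^ k ≤ Bf i' j' := by
      refine le_trans (Summable.le_tsum (hrsum i' j') k fun m _ => ?_) le_sup_left
      exact mul_nonneg (norm_nonneg _) (le_of_lt (pow_pos (hrpos _ _) m))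
    have h2 : ‖coeff (R := ℂ) k (A i' j')‖ ≤ Bf i' j' * ((r i' j')⁻¹) ^ k := by
      have := (le_div_iff₀ hrk).mpr h1
      rwa [div_eq_mul_inv, ← inv_pow] at this
    have hBle : Bf i' j' ≤ B := by
      refine le_trans (Finset.single_le_sum (f := fun j => Bf i' j)
        (fun _ _ => hBfnn _ _) (Finset.mem_univ j')) ?_
      exact Finset.single_le_sum (f := fun i => ∑ j, Bf i j)
        (fun i _ => Finset.sum_nonneg fun j _ => hBfnn _ _) (Finset.mem_univ i')
    have hCle : Cf i' j' ≤ C := by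
      have : Cf i' j' ≤ ∑ i, ∑ j, Cf i j := by
        refine le_trans (Finset.single_le_sum (f := fun j => Cf i' j)
          (fun j _ => le_trans zero_le_one (hCf1 _ _)) (Finset.mem_univ j')) ?_
        exact Finset.single_le_sum (f := fun i => ∑ j, Cf i j)
          (fun i _ => Finset.sum_nonneg fun j _ => le_trans zero_le_one (hCf1 _ _))
          (Finset.mem_univ i')
      rw [hC]; linarith
    calc ‖coeff (R := ℂ) k (A i' j')‖ ≤ Bf i' j' * ((r i' j')⁻¹) ^ k := h2
      _ ≤ B * C ^ k := by
          refine mul_le_mul hBle ?_ (pow_nonneg (inv_nonneg.mpr (hrpos _ _).le) k) hBnn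
          exact pow_le_pow_left₀ (inv_nonneg.mpr (hrpos _ _).le) (le_trans le_sup_left hCle) k
  -- matrix-level bound
  set B' : ℝ := (n : ℝ) * (n : ℝ) * B with hB'
  have hB'nn : 0 ≤ B' := by positivity
  have hAkb : ∀ k, ‖Ak k‖ ≤ B' * C ^ k := by
    intro k
    refine le_trans (matrix_norm_le_sum _) ?_
    calc ∑ i', ∑ j', ‖Ak k i' j'‖ ≤ ∑ _i' : Fin n, ∑ _j' : Fin n, B * C ^ k := by
          refine Finset.sum_le_sum fun i' _ => Finset.sum_le_sum fun j' _ => hentry k i' j'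
      _ = B' * C ^ k := by
          simp [hB', Finset.sum_const, Finset.card_univ]
          ring
  -- the recursion
  have hA00 : Ak 0 = A0 := by
    ext i' j'
    simp [hAk, hA0def, Matrix.map_apply, PowerSeries.coeff_zero_eq_constantCoeff]
  have hrec : ∀ k, A0 * Fk k =
      (if p ∣ k then Fk (k / p) else 0) * A0 - ∑ m ∈ Finset.range k, Ak (m + 1) * Fk (k - (m + 1)) := by
    intro k
    have hL : (A * F).map (coeff (R := ℂ) k) =
        ∑ m ∈ Finset.range (k + 1), Ak m * Fk (k - m) := by
      rw [coeff_matrix_mul]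
      rw [Finset.Nat.sum_antidiagonal_eq_sum_range_succ_mk]
    have hR : ((F.map (mahlerSubst p)) * (A0.map (PowerSeries.C (R := ℂ)))).map (coeff (R := ℂ) k) =
        (if p ∣ k then Fk (k / p) else 0) * A0 := by
      ext i' j'
      by_cases hd : p ∣ k <;>
        simp [Matrix.map_apply, Matrix.mul_apply, PowerSeries.coeff_mul_C,
          coeff_mahlerSubst, hd, hFkdef]
    have this : (A * F).map (coeff (R := ℂ) k) =
        ((F.map (mahlerSubst p)) * (A0.map (PowerSeries.C (R := ℂ)))).map (coeff (R := ℂ) k) := by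
      rw [heq]
    rw [hL, hR] at this
    rw [Finset.sum_range_succ' (fun m => Ak m * Fk (k - m)) k] at this
    simp only [Nat.sub_zero, hA00] at this
    exact eq_sub_of_add_eq' this
  -- solve the recursion
  have hinv : A0⁻¹ * A0 = 1 := Matrix.nonsing_inv_mul A0 hA0
  have hsolve : ∀ k, Fk k = A0⁻¹ * ((if p ∣ k then Fk (k / p) else 0) * A0
      - ∑ m ∈ Finset.range k, Ak (m + 1) * Fk (k - (m + 1))) := by
    intro k
    rw [← hrec k, ← Matrix.mul_assoc, hinv, Matrix.one_mul]
  set E : ℝ := ‖(1 : Matrix (Fin n) (Fin n) ℂ)‖ + 1 with hE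
  have hE1 : 1 ≤ E := by
    have := norm_nonneg (1 : Matrix (Fin n) (Fin n) ℂ); rw [hE]; linarith
  have hEnn : 0 ≤ E := le_trans zero_le_one hE1
  set D : ℝ := max (2 * C) (max 1 (‖A0⁻¹‖ * (‖A0‖ + 2 * B' * C))) with hD
  have hD1 : (1:ℝ) ≤ D := le_trans (le_max_left _ _) (le_max_right _ _)
  have hD2C : 2 * C ≤ D := le_max_left _ _
  have hDkey : ‖A0⁻¹‖ * (‖A0‖ + 2 * B' * C) ≤ D :=
    le_trans (le_max_right _ _) (le_max_right _ _)
  have hDpos : 0 < D := lt_of_lt_of_le one_pos hD1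
  have hDnn : 0 ≤ D := le_of_lt hDpos
  have hFk0 : Fk 0 = 1 := by
    have h : F.map (coeff (R := ℂ) 0) = F.map (PowerSeries.constantCoeff (R := ℂ)) := by
      ext i' j'
      simp [Matrix.map_apply, PowerSeries.coeff_zero_eq_constantCoeff]
    show F.map (coeff (R := ℂ) 0) = 1
    rw [h, hF0]
  -- the key inductive bound
  have hFb : ∀ k, ‖Fk k‖ ≤ E * D ^ k := by
    intro k
    induction k using Nat.strong_induction_on with
    | _ k ih =>
      rcases Nat.eq_zero_or_pos k with hk0 | hkpos
      · subst hk0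
        rw [hFk0, pow_zero, mul_one, hE]
        linarith
      · have hDk1 : (0:ℝ) ≤ D ^ (k - 1) := pow_nonneg hDnn _
        have hEDk1 : (0:ℝ) ≤ E * D ^ (k - 1) := mul_nonneg hEnn hDk1
        have hR : ‖(if p ∣ k then Fk (k / p) else 0) * A0‖ ≤ E * D ^ (k - 1) * ‖A0‖ := by
          refine le_trans (norm_mul_le _ _) ?_
          refine mul_le_mul_of_nonneg_right ?_ (norm_nonneg _)
          by_cases hd : p ∣ k
          · rw [if_pos hd]
            have hlt : k / p < k := Nat.div_lt_self hkpos (lt_of_lt_of_le one_lt_two hp)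
            refine le_trans (ih _ hlt) ?_
            exact mul_le_mul_of_nonneg_left (pow_le_pow_right₀ hD1 (Nat.le_pred_of_lt hlt)) hEnn
          · rw [if_neg hd, norm_zero]
            exact hEDk1
        have hS : ‖∑ m ∈ Finset.range k, Ak (m + 1) * Fk (k - (m + 1))‖ ≤
            2 * B' * C * (E * D ^ (k - 1)) := by
          refine le_trans (norm_sum_le _ _) ?_
          have hterm : ∀ m ∈ Finset.range k,
              ‖Ak (m + 1) * Fk (k - (m + 1))‖ ≤ (B' * C * E * D ^ (k - 1)) * (1/2) ^ m := by
            intro m hm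
            have hm' : m < k := Finset.mem_range.mp hm
            have hDkm : (0:ℝ) ≤ D ^ (k - (m + 1)) := pow_nonneg hDnn _
            refine le_trans (norm_mul_le _ _) ?_
            have h1 : ‖Ak (m + 1)‖ ≤ B' * C ^ (m + 1) := hAkb (m + 1)
            have h2 : ‖Fk (k - (m + 1))‖ ≤ E * D ^ (k - (m + 1)) := ih _ (by omega)
            calc ‖Ak (m + 1)‖ * ‖Fk (k - (m + 1))‖
                ≤ (B' * C ^ (m + 1)) * (E * D ^ (k - (m + 1))) :=
                  mul_le_mul h1 h2 (norm_nonneg _)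
                    (mul_nonneg hB'nn (pow_nonneg hCnn _))
              _ ≤ (B' * C * E * D ^ (k - 1)) * (1/2) ^ m := by
                  have hCD : C ^ m ≤ (D * (1/2)) ^ m :=
                    pow_le_pow_left₀ hCnn (by linarith) m
                  have hpow : D ^ m * D ^ (k - (m + 1)) = D ^ (k - 1) := by
                    rw [← pow_add]
                    congr 1
                    omega
                  calc (B' * C ^ (m + 1)) * (E * D ^ (k - (m + 1)))
                      = B' * C * E * (C ^ m * D ^ (k - (m + 1))) := by ring
                    _ ≤ B' * C * E * ((D * (1/2)) ^ m * D ^ (k - (m + 1))) := by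
                        refine mul_le_mul_of_nonneg_left
                          (mul_le_mul_of_nonneg_right hCD hDkm)
                          (mul_nonneg (mul_nonneg hB'nn hCnn) hEnn)
                    _ = (B' * C * E * D ^ (k - 1)) * (1/2) ^ m := by
                        rw [mul_pow,
                          show D ^ m * (1/2:ℝ) ^ m * D ^ (k - (m + 1))
                            = (D ^ m * D ^ (k - (m + 1))) * (1/2) ^ m from by ring,
                          hpow]
                        ring
          refine le_trans (Finset.sum_le_sum hterm) ?_
          rw [← Finset.mul_sum]
          calc (B' * C * E * D ^ (k - 1)) * ∑ m ∈ Finset.range k, (1/2:ℝ) ^ m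
              ≤ (B' * C * E * D ^ (k - 1)) * 2 := by
                refine mul_le_mul_of_nonneg_left (sum_geometric_two_le k) ?_
                exact mul_nonneg (mul_nonneg (mul_nonneg hB'nn hCnn) hEnn) hDk1
            _ = 2 * B' * C * (E * D ^ (k - 1)) := by ring
        rw [hsolve k]
        calc ‖A0⁻¹ * ((if p ∣ k then Fk (k / p) else 0) * A0
                - ∑ m ∈ Finset.range k, Ak (m + 1) * Fk (k - (m + 1)))‖
            ≤ ‖A0⁻¹‖ * ‖(if p ∣ k then Fk (k / p) else 0) * A0
                - ∑ m ∈ Finset.range k, Ak (m + 1) * Fk (k - (m + 1))‖ := norm_mul_le _ _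
          _ ≤ ‖A0⁻¹‖ * (‖(if p ∣ k then Fk (k / p) else 0) * A0‖
                + ‖∑ m ∈ Finset.range k, Ak (m + 1) * Fk (k - (m + 1))‖) :=
              mul_le_mul_of_nonneg_left (norm_sub_le _ _) (norm_nonneg _)
          _ ≤ ‖A0⁻¹‖ * (E * D ^ (k - 1) * ‖A0‖ + 2 * B' * C * (E * D ^ (k - 1))) := by
              refine mul_le_mul_of_nonneg_left (add_le_add hR hS) (norm_nonneg _)
          _ = (‖A0⁻¹‖ * (‖A0‖ + 2 * B' * C)) * (E * D ^ (k - 1)) := by ring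
          _ ≤ D * (E * D ^ (k - 1)) := mul_le_mul_of_nonneg_right hDkey hEDk1
          _ = E * (D ^ (k - 1) * D) := by ring
          _ = E * D ^ k := by
              rw [← pow_succ, Nat.sub_add_cancel hkpos]
  -- conclusion: summability at radius (2D)⁻¹
  have hDne : D ≠ 0 := ne_of_gt hDpos
  have h2Dpos : (0:ℝ) < 2 * D := by linarith
  refine ⟨(2 * D)⁻¹, inv_pos.mpr h2Dpos, ?_⟩
  have hsumg : Summable fun k : ℕ => E * (1/2:ℝ) ^ k := summable_geometric_two.mul_left E
  refine Summable.of_nonneg_of_le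
    (fun k => mul_nonneg (norm_nonneg _) (pow_nonneg (inv_nonneg.mpr h2Dpos.le) k))
    (fun k => ?_) hsumg
  have hentryF : ‖coeff (R := ℂ) k (F i j)‖ ≤ E * D ^ k :=
    le_trans (matrix_entry_norm_le (Fk k) i j) (hFb k)
  have hhalf : D * (2 * D)⁻¹ = 1/2 := by
    rw [mul_comm 2 D, mul_inv, ← mul_assoc, mul_inv_cancel₀ hDne, one_mul]
    norm_num
  calc ‖coeff (R := ℂ) k (F i j)‖ * ((2 * D)⁻¹) ^ k
      ≤ (E * D ^ k) * ((2 * D)⁻¹) ^ k :=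
        mul_le_mul_of_nonneg_right hentryF (pow_nonneg (inv_nonneg.mpr h2Dpos.le) k)
    _ = E * (D * (2 * D)⁻¹) ^ k := by rw [mul_assoc, ← mul_pow]
    _ = E * (1/2) ^ k := by rw [hhalf]

end Aux
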